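/- Let X be a nonempty set, p a partial metric on X, and a a positive real number such that p(x,x) = a for all x ∈ X. If a sequence {x_n} in X is statistically bounded (i.e., for every fixed u ∈ X there exists a positive real number M such that d({n ∈ ℕ : p(x_n,u) ≥ M}) = 0), then there exists a non-negative real number r such that st-LIM^r x_n ≠ ∅. -/

import Mathlib

/-- A partial metric on a set `X`. -/
structure IsPartialMetric {X : Type*} (p : X → X → ℝ) : Prop where
  nonneg : ∀ x y : X, 0 ≤ p x y
  self_le : ∀ x y : X, p x x ≤ p x y
  eq_iff : ∀ x y : X, x = y ↔ p x x = p x y ∧ p x y = p y y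
  symm : ∀ x y : X, p x y = p y x
  triangle : ∀ x y z : X, p x y ≤ p x z + p z y - p z z

open Classical in
/-- `A ⊆ ℕ` has natural density `d`. -/
def HasNatDensity (A : Set ℕ) (d : ℝ) : Prop :=
  Filter.Tendsto
    (fun n : ℕ => (((Finset.range n).filter (fun k => k ∈ A)).card : ℝ) / (n : ℝ))
    Filter.atTop (nhds d)

/-- `l` is a rough statistical limit point of the sequence `x` with roughness degree `r`,
i.e. `l ∈ st-LIM^r x_n`. -/
def RStatLimit {X : Type*} (p : X → X → ℝ) (x : ℕ → X) (r : ℝ) (l : X) : Prop :=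
  ∀ ε : ℝ, 0 < ε → HasNatDensity {n : ℕ | r + ε ≤ |p (x n) l - p l l|} 0

/-- If all self-distances equal `a > 0` and `x_n` is statistically bounded, then
`st-LIM^r x_n ≠ ∅` for some `r ≥ 0`. -/
theorem rStatLimit_nonempty_of_statBounded
    {X : Type*} [Nonempty X] (p : X → X → ℝ) (hp : IsPartialMetric p)
    (a : ℝ) (ha : 0 < a) (hself : ∀ x : X, p x x = a)
    (x : ℕ → X)
    (hbdd : ∀ u : X, ∃ M : ℝ, 0 < M ∧ HasNatDensity {n : ℕ | M ≤ p (x n) u} 0) :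
    ∃ r : ℝ, 0 ≤ r ∧ ∃ l : X, RStatLimit p x r l := by
  classical
  obtain ⟨u⟩ := ‹Nonempty X›
  obtain ⟨M, hM, hdens⟩ := hbdd u
  refine ⟨M, hM.le, u, ?_⟩
  intro ε hε
  have hsub : ∀ n, n ∈ {k : ℕ | M + ε ≤ |p (x k) u - p u u|} → n ∈ {k : ℕ | M ≤ p (x k) u} := by
    intro n hn
    simp only [Set.mem_setOf_eq] at hn ⊢
    have h1 : a ≤ p (x n) u := by
      have := hp.self_le u (x n)
      rw [hp.symm u (x n)] at this
      rw [← hself u]; exact this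
    have habs : |p (x n) u - p u u| = p (x n) u - a := by
      rw [hself u, abs_of_nonneg (by linarith)]
    rw [habs] at hn
    nlinarith
  refine squeeze_zero (fun n => by positivity) (fun n => ?_) hdens
  have hcard : ((((Finset.range n).filter (fun k => k ∈ {k : ℕ | M + ε ≤ |p (x k) u - p u u|})).card : ℝ))
      ≤ (((Finset.range n).filter (fun k => k ∈ {k : ℕ | M ≤ p (x k) u})).card : ℝ) := by
    exact_mod_cast Finset.card_le_card (Finset.monotone_filter_right _ (fun k _ hk => hsub k hk))
  have hn0 : (0:ℝ) ≤ (n:ℝ) := Nat.cast_nonneg n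
  exact div_le_div_of_nonneg_right hcard hn0
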